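/- Let u and v be positive real numbers. Then there is exactly one smooth real conic that is tangent to each of the three coordinate lines X = 0, Y = 0 and Z = 0 of the projective plane and passes through the two points [u : 0 : 1] and [0 : v : 1]. -/

import Mathlib

noncomputable section

/-- The value of the quadratic form `Q = c₀X² + c₁Y² + c₂Z² + c₃XY + c₄XZ + c₅YZ`. -/
def Qval (c : Fin 6 → ℝ) (x y z : ℝ) : ℝ :=
  c 0 * x ^ 2 + c 1 * y ^ 2 + c 2 * z ^ 2 + c 3 * (x * y) + c 4 * (x * z) + c 5 * (y * z)

/-- The symmetric matrix of the quadratic form `Q`. -/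
def symMat (c : Fin 6 → ℝ) : Matrix (Fin 3) (Fin 3) ℝ :=
  !![c 0, c 3 / 2, c 4 / 2; c 3 / 2, c 1, c 5 / 2; c 4 / 2, c 5 / 2, c 2]

/-- The conic `{Q = 0}` is smooth (nondegenerate). -/
def SmoothConic (c : Fin 6 → ℝ) : Prop := (symMat c).det ≠ 0

/-- Tangency to the coordinate line `X = 0` (parametrized by `[0:s:u]`): the restricted
binary quadratic form is nonzero with vanishing discriminant. -/
def TangentX (c : Fin 6 → ℝ) : Prop :=
  ¬ (c 1 = 0 ∧ c 2 = 0 ∧ c 5 = 0) ∧ (c 5) ^ 2 - 4 * c 1 * c 2 = 0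

/-- Tangency to the coordinate line `Y = 0` (parametrized by `[s:0:u]`). -/
def TangentY (c : Fin 6 → ℝ) : Prop :=
  ¬ (c 0 = 0 ∧ c 2 = 0 ∧ c 4 = 0) ∧ (c 4) ^ 2 - 4 * c 0 * c 2 = 0

/-- Tangency to the coordinate line `Z = 0` (parametrized by `[s:u:0]`). -/
def TangentZ (c : Fin 6 → ℝ) : Prop :=
  ¬ (c 0 = 0 ∧ c 1 = 0 ∧ c 3 = 0) ∧ (c 3) ^ 2 - 4 * c 0 * c 1 = 0

set_option maxHeartbeats 1000000

lemma det_symMat (c : Fin 6 → ℝ) :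
    (symMat c).det = c 0 * (c 1 * c 2 - c 5 / 2 * (c 5 / 2))
      - c 3 / 2 * (c 3 / 2 * c 2 - c 5 / 2 * (c 4 / 2))
      + c 4 / 2 * (c 3 / 2 * (c 5 / 2) - c 1 * (c 4 / 2)) := by
  simp [symMat, Matrix.det_fin_three]
  ring

/-- There is exactly one smooth real conic tangent to the three coordinate lines and
passing through the two boundary points `[u:0:1]` and `[0:v:1]` (`u, v > 0`). -/
theorem unique_real_conic_tangent_to_coordinate_triangle_through_axis_points
    (u v : ℝ) (hu : 0 < u) (hv : 0 < v) :
    ∃ S : Finset (Fin 6 → ℝ), S.card = 1 ∧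
      (∀ c ∈ S, c ≠ 0 ∧ SmoothConic c ∧ TangentX c ∧ TangentY c ∧ TangentZ c ∧
        Qval c u 0 1 = 0 ∧ Qval c 0 v 1 = 0) ∧
      (∀ c : Fin 6 → ℝ,
        (c ≠ 0 ∧ SmoothConic c ∧ TangentX c ∧ TangentY c ∧ TangentZ c ∧
          Qval c u 0 1 = 0 ∧ Qval c 0 v 1 = 0) →
        ∃ c' ∈ S, ∃ r : ℝ, r ≠ 0 ∧ c = r • c') ∧
      (∀ c ∈ S, ∀ c' ∈ S, (∃ r : ℝ, r ≠ 0 ∧ c = r • c') → c = c') := by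
  have hu0 : u ≠ 0 := hu.ne'
  have hv0 : v ≠ 0 := hv.ne'
  set cs : Fin 6 → ℝ := ![v^2, u^2, u^2*v^2, -(2*u*v), -(2*u*v^2), -(2*u^2*v)] with hcs
  have e0 : cs 0 = v^2 := rfl
  have e1 : cs 1 = u^2 := rfl
  have e2 : cs 2 = u^2*v^2 := rfl
  have e3 : cs 3 = -(2*u*v) := rfl
  have e4 : cs 4 = -(2*u*v^2) := rfl
  have e5 : cs 5 = -(2*u^2*v) := rfl
  refine ⟨{cs}, rfl, ?_, ?_, ?_⟩
  · intro c hc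
    rw [Finset.mem_singleton] at hc; subst hc
    refine ⟨?_, ?_, ⟨?_, ?_⟩, ⟨?_, ?_⟩, ⟨?_, ?_⟩, ?_, ?_⟩
    · intro h
      have := congrFun h 2
      rw [e2] at this
      exact (mul_ne_zero (pow_ne_zero 2 hu0) (pow_ne_zero 2 hv0)) this
    · unfold SmoothConic
      rw [det_symMat, e0, e1, e2, e3, e4, e5]
      have : v ^ 2 * (u ^ 2 * (u ^ 2 * v ^ 2) - -(2 * u ^ 2 * v) / 2 * (-(2 * u ^ 2 * v) / 2)) -
          -(2 * u * v) / 2 * (-(2 * u * v) / 2 * (u ^ 2 * v ^ 2) - -(2 * u ^ 2 * v) / 2 * (-(2 * u * v ^ 2) / 2)) +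
          -(2 * u * v ^ 2) / 2 * (-(2 * u * v) / 2 * (-(2 * u ^ 2 * v) / 2) - u ^ 2 * (-(2 * u * v ^ 2) / 2))
          = -(4 * u^4 * v^4) := by ring
      rw [this]
      exact neg_ne_zero.mpr (by positivity)
    · rintro ⟨h, -, -⟩; rw [e1] at h; exact pow_ne_zero 2 hu0 h
    · rw [e1, e2, e5]; ring
    · rintro ⟨h, -, -⟩; rw [e0] at h; exact pow_ne_zero 2 hv0 h
    · rw [e0, e2, e4]; ring
    · rintro ⟨h, -, -⟩; rw [e0] at h; exact pow_ne_zero 2 hv0 h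
    · rw [e0, e1, e3]; ring
    · unfold Qval; rw [e0, e2, e4]; ring
    · unfold Qval; rw [e1, e2, e5]; ring
  · rintro c ⟨-, hsm, ⟨-, tX⟩, ⟨-, tY⟩, ⟨-, tZ⟩, hp1, hp2⟩
    unfold Qval at hp1 hp2
    have h0 : c 0 ≠ 0 := by
      intro h
      have h4 : c 4 = 0 := by
        have hs : c 4 ^ 2 = 0 := by linear_combination tY + 4 * c 2 * h
        exact (pow_eq_zero_iff two_ne_zero).mp hs
      have h3 : c 3 = 0 := by
        have hs : c 3 ^ 2 = 0 := by linear_combination tZ + 4 * c 1 * h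
        exact (pow_eq_zero_iff two_ne_zero).mp hs
      exact hsm (by rw [det_symMat, h, h3, h4]; ring)
    have h1 : c 1 ≠ 0 := by
      intro h
      have h5 : c 5 = 0 := by
        have hs : c 5 ^ 2 = 0 := by linear_combination tX + 4 * c 2 * h
        exact (pow_eq_zero_iff two_ne_zero).mp hs
      have h3 : c 3 = 0 := by
        have hs : c 3 ^ 2 = 0 := by linear_combination tZ + 4 * c 0 * h
        exact (pow_eq_zero_iff two_ne_zero).mp hs
      exact hsm (by rw [det_symMat, h, h3, h5]; ring)
    have hc4 : c 4 = -(2 * c 0 * u) := by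
      have hsq : (2 * c 0 * u + c 4) ^ 2 = 0 := by linear_combination 4 * c 0 * hp1 + tY
      have := (pow_eq_zero_iff two_ne_zero).mp hsq
      linarith
    have hc2 : c 2 = c 0 * u ^ 2 := by linear_combination hp1 - u * hc4
    have hc5 : c 5 = -(2 * c 1 * v) := by
      have hsq : (2 * c 1 * v + c 5) ^ 2 = 0 := by linear_combination 4 * c 1 * hp2 + tX
      have := (pow_eq_zero_iff two_ne_zero).mp hsq
      linarith
    have hc1v : c 1 * v ^ 2 = c 0 * u ^ 2 := by linear_combination -hp2 + v * hc5 + hc2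
    have hc1 : c 1 = c 0 * u ^ 2 / v ^ 2 := by
      field_simp
      linear_combination hc1v
    have hfac : (v * c 3 - 2 * c 0 * u) * (v * c 3 + 2 * c 0 * u) = 0 := by
      linear_combination v ^ 2 * tZ + 4 * c 0 * hc1v
    have hc3 : c 3 = -(2 * c 0 * u / v) := by
      rcases mul_eq_zero.mp hfac with h | h
      · exfalso
        apply hsm
        have hc3' : c 3 = 2 * c 0 * u / v := by
          field_simp
          linear_combination h
        rw [det_symMat, hc3', hc4, hc5, hc2, hc1]
        field_simp
        ring
      · field_simp
        linear_combination h
    refine ⟨cs, Finset.mem_singleton_self cs, c 0 / v ^ 2, div_ne_zero h0 (pow_ne_zero 2 hv0), ?_⟩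
    funext i
    fin_cases i
    · show c 0 = c 0 / v ^ 2 * v ^ 2
      field_simp
    · show c 1 = c 0 / v ^ 2 * u ^ 2
      rw [hc1]; ring
    · show c 2 = c 0 / v ^ 2 * (u ^ 2 * v ^ 2)
      rw [hc2]; field_simp
    · show c 3 = c 0 / v ^ 2 * -(2 * u * v)
      rw [hc3]; field_simp
    · show c 4 = c 0 / v ^ 2 * -(2 * u * v ^ 2)
      rw [hc4]; field_simp
    · show c 5 = c 0 / v ^ 2 * -(2 * u ^ 2 * v)
      rw [hc5, hc1]; field_simp
  · intro c hc c' hc' _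
    rw [Finset.mem_singleton] at hc hc'
    rw [hc, hc']


end
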